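/- Endpoints of trajectories of the perturbed rotation system converge to the rotated initial point as the perturbation vanishes: for every r⁰ ∈ ℝ³, every s > 0, and every δ > 0 there exists ε₀ > 0 such that for every ε ∈ (0, ε₀], every absolutely continuous solution r : [0,s] → ℝ³ of r′(τ) = ε ω f₀(r(τ)) + f₁(r(τ)) with r(0) = r⁰ satisfies |r(s) − Rot_s(r⁰)| < δ. -/

import Mathlib

open MeasureTheory Set

noncomputable section

/-- The state space: Bloch vectors in `ℝ³` with the Euclidean norm. -/
abbrev Pt := EuclideanSpace ℝ (Fin 3)

/-- The drift vector field `f₀`. -/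
def f0 (ω γ : ℝ) (r : Pt) : Pt :=
  WithLp.toLp 2 (![-r 1 - (γ / (2 * ω)) * r 0, r 0 - (γ / (2 * ω)) * r 1, (γ / ω) * (1 - r 2)])

/-- The coherent-control vector field `f₁` (infinitesimal rotation about the `r_x`-axis). -/
def f1 (r : Pt) : Pt := WithLp.toLp 2 (![0, -r 2, r 1])

/-- The incoherent-control vector field `f₂`. -/
def f2 (r : Pt) : Pt := WithLp.toLp 2 (![-r 0 / 2, -r 1 / 2, -r 2])

/-- Rotation by angle `s` about the `r_x`-axis. -/
def Rot (s : ℝ) (r : Pt) : Pt :=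
  WithLp.toLp 2 (![r 0, r 1 * Real.cos s - r 2 * Real.sin s, r 1 * Real.sin s + r 2 * Real.cos s])

/-! ### Auxiliary lemmas -/

lemma pt_norm_eq (v : Pt) : ‖v‖ = Real.sqrt (v 0 ^ 2 + v 1 ^ 2 + v 2 ^ 2) := by
  rw [EuclideanSpace.norm_eq]
  simp [Fin.sum_univ_three, sq_abs, add_assoc]

lemma coord_le_norm (v : Pt) (i : Fin 3) : |v i| ≤ ‖v‖ := by
  rw [pt_norm_eq, ← Real.sqrt_sq_eq_abs]
  apply Real.sqrt_le_sqrt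
  fin_cases i <;> simp <;>
    nlinarith [sq_nonneg (v 0), sq_nonneg (v 1), sq_nonneg (v 2)]

lemma norm_le_sum (v : Pt) : ‖v‖ ≤ |v 0| + |v 1| + |v 2| := by
  rw [pt_norm_eq]
  have h : v 0 ^ 2 + v 1 ^ 2 + v 2 ^ 2 ≤ (|v 0| + |v 1| + |v 2|) ^ 2 := by
    nlinarith [abs_nonneg (v 0), abs_nonneg (v 1), abs_nonneg (v 2), sq_abs (v 0),
      sq_abs (v 1), sq_abs (v 2), mul_nonneg (abs_nonneg (v 0)) (abs_nonneg (v 1)),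
      mul_nonneg (abs_nonneg (v 0)) (abs_nonneg (v 2)),
      mul_nonneg (abs_nonneg (v 1)) (abs_nonneg (v 2))]
  calc Real.sqrt (v 0 ^ 2 + v 1 ^ 2 + v 2 ^ 2) ≤ Real.sqrt ((|v 0| + |v 1| + |v 2|) ^ 2) :=
        Real.sqrt_le_sqrt h
    _ = |v 0| + |v 1| + |v 2| := Real.sqrt_sq (by positivity)

lemma f1_norm_le (v : Pt) : ‖f1 v‖ ≤ ‖v‖ := by
  rw [pt_norm_eq, pt_norm_eq]
  apply Real.sqrt_le_sqrt
  simp [f1]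
  nlinarith [sq_nonneg (v 0)]

lemma f1_sub (a b : Pt) : f1 a - f1 b = f1 (a - b) := by
  ext i
  fin_cases i <;> simp [f1] <;> ring

lemma rot_norm (t : ℝ) (v : Pt) : ‖Rot t v‖ = ‖v‖ := by
  rw [pt_norm_eq, pt_norm_eq]
  congr 1
  simp [Rot]
  nlinarith [Real.sin_sq_add_cos_sq t]

lemma rot_zero (v : Pt) : Rot 0 v = v := by
  ext i
  fin_cases i <;> simp [Rot]

lemma coord_cont (i : Fin 3) : Continuous fun v : Pt => v i :=
  (EuclideanSpace.proj (𝕜 := ℝ) i).continuous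

lemma f0_cont (ω γ : ℝ) : Continuous (f0 ω γ) := by
  apply (PiLp.continuous_toLp 2 fun _ : Fin 3 => ℝ).comp
  apply continuous_pi
  intro i
  have h0 := coord_cont 0; have h1 := coord_cont 1; have h2 := coord_cont 2
  fin_cases i
  · show Continuous fun v : Pt => -v 1 - γ / (2 * ω) * v 0
    fun_prop
  · show Continuous fun v : Pt => v 0 - γ / (2 * ω) * v 1
    fun_prop
  · show Continuous fun v : Pt => γ / ω * (1 - v 2)
    fun_prop

lemma f1_cont : Continuous f1 := by
  apply (PiLp.continuous_toLp 2 fun _ : Fin 3 => ℝ).comp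
  apply continuous_pi
  intro i
  have h1 := coord_cont 1; have h2 := coord_cont 2
  fin_cases i
  · exact continuous_const
  · show Continuous fun v : Pt => -v 2
    fun_prop
  · exact h1

lemma y_hasDerivAt (r0 : Pt) (t : ℝ) :
    HasDerivAt (fun t => Rot t r0) (f1 (Rot t r0)) t := by
  set c : Pt := WithLp.toLp 2 ![r0 0, 0, 0] with hc
  set A : Pt := WithLp.toLp 2 ![0, r0 1, r0 2] with hA
  set B : Pt := WithLp.toLp 2 ![0, -r0 2, r0 1] with hB
  have hy : (fun t => Rot t r0) = fun t => c + (Real.cos t • A + Real.sin t • B) := by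
    funext t; ext i
    fin_cases i <;> simp [Rot, hc, hA, hB] <;> ring
  rw [hy]
  have hd : HasDerivAt (fun t => c + (Real.cos t • A + Real.sin t • B))
      ((-Real.sin t) • A + Real.cos t • B) t :=
    (((Real.hasDerivAt_cos t).smul_const A).add
      ((Real.hasDerivAt_sin t).smul_const B)).const_add c
  convert hd using 1
  ext i
  fin_cases i <;> simp [f1, Rot, hc, hA, hB] <;> ring

lemma f0_norm_le (ω γ : ℝ) (hω : 0 < ω) (hγ : 0 ≤ γ) (v : Pt) :
    ‖f0 ω γ v‖ ≤ (2 * (1 + γ / (2 * ω)) + γ / ω) * (1 + ‖v‖) := by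
  have ha : (0:ℝ) ≤ γ / (2 * ω) := by positivity
  have hb : (0:ℝ) ≤ γ / ω := by positivity
  have h := norm_le_sum (f0 ω γ v)
  have e0 : (f0 ω γ v) 0 = -v 1 - γ / (2 * ω) * v 0 := rfl
  have e1 : (f0 ω γ v) 1 = v 0 - γ / (2 * ω) * v 1 := rfl
  have e2 : (f0 ω γ v) 2 = γ / ω * (1 - v 2) := rfl
  rw [e0, e1, e2] at h
  have t0 : |(-v 1 - γ / (2 * ω) * v 0)| ≤ |v 1| + γ / (2 * ω) * |v 0| := by
    calc |(-v 1 - γ / (2 * ω) * v 0)| = |v 1 + γ / (2 * ω) * v 0| := by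
          rw [show -v 1 - γ / (2 * ω) * v 0 = -(v 1 + γ / (2 * ω) * v 0) by ring, abs_neg]
      _ ≤ |v 1| + |γ / (2 * ω) * v 0| := abs_add_le _ _
      _ = |v 1| + γ / (2 * ω) * |v 0| := by rw [abs_mul, abs_of_nonneg ha]
  have t1 : |v 0 - γ / (2 * ω) * v 1| ≤ |v 0| + γ / (2 * ω) * |v 1| := by
    calc |v 0 - γ / (2 * ω) * v 1| ≤ |v 0| + |γ / (2 * ω) * v 1| := abs_sub _ _
      _ = |v 0| + γ / (2 * ω) * |v 1| := by rw [abs_mul, abs_of_nonneg ha]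
  have t2 : |γ / ω * (1 - v 2)| ≤ γ / ω * (1 + |v 2|) := by
    rw [abs_mul, abs_of_nonneg hb]
    have : |1 - v 2| ≤ 1 + |v 2| := by
      calc |1 - v 2| ≤ |(1:ℝ)| + |v 2| := abs_sub _ _
        _ = 1 + |v 2| := by rw [abs_one]
    nlinarith
  have c0 := coord_le_norm v 0
  have c1 := coord_le_norm v 1
  have c2 := coord_le_norm v 2
  nlinarith [norm_nonneg v, abs_nonneg (v 0), abs_nonneg (v 1), abs_nonneg (v 2)]

/-- Endpoints of absolutely continuous solutions of `r′ = ε ω f₀(r) + f₁(r)`, `r(0) = r⁰`,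
on `[0,s]` converge to the rotated point `Rot_s(r⁰)` as `ε → 0⁺`. -/
theorem endpoint_tendsto_rot (ω γ : ℝ) (hω : 0 < ω) (hγ : 0 ≤ γ) (r0 : Pt) (s δ : ℝ)
    (hs : 0 < s) (hδ : 0 < δ) :
    ∃ ε0 > (0:ℝ), ∀ ε : ℝ, 0 < ε → ε ≤ ε0 →
      ∀ r : ℝ → Pt,
        IntervalIntegrable (fun τ => (ε * ω) • f0 ω γ (r τ) + f1 (r τ)) volume 0 s →
        (∀ t ∈ Icc 0 s, r t = r0 + ∫ τ in (0:ℝ)..t, ((ε * ω) • f0 ω γ (r τ) + f1 (r τ))) →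
        ‖r s - Rot s r0‖ < δ := by
  have ha : (0:ℝ) ≤ γ / (2 * ω) := by positivity
  have hb : (0:ℝ) ≤ γ / ω := by positivity
  set C : ℝ := 2 * (1 + γ / (2 * ω)) + γ / ω with hCdef
  have hCpos : 0 < C := by rw [hCdef]; linarith
  set K : ℝ := 1 + C with hKdef
  have hKpos : 0 < K := by rw [hKdef]; linarith
  set M : ℝ := 1 + ‖r0‖ with hMdef
  have hMpos : 0 < M := by have := norm_nonneg r0; rw [hMdef]; linarith
  have hexp : 0 < Real.exp (K * s) := Real.exp_pos _
  have hden : 0 < 2 * ω * C * M * Real.exp (K * s) := by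
    apply mul_pos (mul_pos (mul_pos (mul_pos two_pos hω) hCpos) hMpos) hexp
  refine ⟨min (1 / ω) (δ / (2 * ω * C * M * Real.exp (K * s))),
    lt_min (by positivity) (div_pos hδ hden), ?_⟩
  intro ε hε hεle r hInt hr
  have hεω : ε * ω ≤ 1 := by
    have h1 : ε ≤ 1 / ω := hεle.trans (min_le_left _ _)
    rwa [le_div_iff₀ hω] at h1
  have hεδ : ε * (2 * ω * C * M * Real.exp (K * s)) ≤ δ := by
    have h1 : ε ≤ δ / (2 * ω * C * M * Real.exp (K * s)) := hεle.trans (min_le_right _ _)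
    rwa [le_div_iff₀ hden] at h1
  set g := fun τ => (ε * ω) • f0 ω γ (r τ) + f1 (r τ) with hgdef
  have huIcc : uIcc (0:ℝ) s = Icc 0 s := uIcc_of_le hs.le
  have hFc : ContinuousOn (fun t => ∫ τ in (0:ℝ)..t, g τ) (Icc 0 s) := by
    have := intervalIntegral.continuousOn_primitive_interval' hInt left_mem_uIcc
    rwa [huIcc] at this
  have hrc : ContinuousOn r (Icc 0 s) :=
    (continuousOn_const.add hFc).congr fun t ht => hr t ht
  have hgc : ContinuousOn g (Icc 0 s) := by
    apply ContinuousOn.add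
    · exact (((f0_cont ω γ).comp_continuousOn hrc)).const_smul (ε * ω)
    · exact f1_cont.comp_continuousOn hrc
  have hr0 : r 0 = r0 := by
    have := hr 0 ⟨le_refl 0, hs.le⟩
    simpa using this
  have hεωpos : 0 < ε * ω := mul_pos hε hω
  -- the derivative of r
  have hrd : ∀ x ∈ Ico 0 s, HasDerivWithinAt r (g x) (Ici x) x := by
    intro x hx
    have hmemIoi : Icc 0 s ∈ nhdsWithin x (Ioi x) :=
      mem_nhdsWithin.2 ⟨Iio s, isOpen_Iio, hx.2,
        fun t ht => ⟨hx.1.trans ht.2.le, ht.1.le⟩⟩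
    have hmemIci : Icc 0 s ∈ nhdsWithin x (Ici x) :=
      mem_nhdsWithin.2 ⟨Iio s, isOpen_Iio, hx.2,
        fun t ht => ⟨hx.1.trans ht.2, ht.1.le⟩⟩
    have hg_int : IntervalIntegrable g volume 0 x := by
      apply hInt.mono_set
      rw [uIcc_of_le hx.1, huIcc]
      exact Icc_subset_Icc le_rfl hx.2.le
    have hmeas : StronglyMeasurableAtFilter g (nhdsWithin x (Ioi x)) volume :=
      ⟨Icc 0 s, hmemIoi, hgc.aestronglyMeasurable measurableSet_Icc⟩
    have hcont : ContinuousWithinAt g (Ioi x) x :=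
      (hgc x ⟨hx.1, hx.2.le⟩).mono_of_mem_nhdsWithin hmemIoi
    have hF : HasDerivWithinAt (fun u => ∫ τ in (0:ℝ)..u, g τ) (g x) (Ici x) x :=
      intervalIntegral.integral_hasDerivWithinAt_right hg_int hmeas hcont
    have hF' : HasDerivWithinAt (fun u => r0 + ∫ τ in (0:ℝ)..u, g τ) (g x) (Ici x) x :=
      hF.const_add r0
    exact hF'.congr_of_eventuallyEq
      (Filter.eventuallyEq_of_mem hmemIci fun t ht => hr t ht) (hr x ⟨hx.1, hx.2.le⟩)
  set y := fun t => Rot t r0 with hydef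
  set e := fun t => r t - y t with hedef
  have hed : ∀ x ∈ Ico 0 s, HasDerivWithinAt e (g x - f1 (y x)) (Ici x) x :=
    fun x hx => (hrd x hx).sub (y_hasDerivAt r0 x).hasDerivWithinAt
  have hyc : Continuous y :=
    continuous_iff_continuousAt.2 fun t => (y_hasDerivAt r0 t).continuousAt
  have hec : ContinuousOn e (Icc 0 s) := hrc.sub hyc.continuousOn
  have he0 : ‖e 0‖ ≤ 0 := by
    simp [hedef, hydef, hr0, rot_zero]
  have bound : ∀ x ∈ Ico 0 s, ‖g x - f1 (y x)‖ ≤ K * ‖e x‖ + ε * ω * C * M := by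
    intro x hx
    have h1 : g x - f1 (y x) = (ε * ω) • f0 ω γ (r x) + f1 (e x) := by
      rw [hgdef]
      simp only []
      rw [add_sub_assoc, f1_sub]
    rw [h1]
    have h2 : ‖(ε * ω) • f0 ω γ (r x)‖ = (ε * ω) * ‖f0 ω γ (r x)‖ := by
      rw [norm_smul, Real.norm_eq_abs, abs_of_pos hεωpos]
    have h3 := f0_norm_le ω γ hω hγ (r x)
    rw [← hCdef] at h3
    have h4 := f1_norm_le (e x)
    have hrx : ‖r x‖ ≤ ‖e x‖ + ‖r0‖ := by
      have hre : r x = e x + y x := by simp [hedef]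
      calc ‖r x‖ = ‖e x + y x‖ := by rw [← hre]
        _ ≤ ‖e x‖ + ‖y x‖ := norm_add_le _ _
        _ = ‖e x‖ + ‖r0‖ := by rw [hydef]; simp [rot_norm]
    calc ‖(ε * ω) • f0 ω γ (r x) + f1 (e x)‖
        ≤ ‖(ε * ω) • f0 ω γ (r x)‖ + ‖f1 (e x)‖ := norm_add_le _ _
      _ ≤ (ε * ω) * (C * (1 + ‖r x‖)) + ‖e x‖ := by
          rw [h2]
          have := mul_le_mul_of_nonneg_left h3 hεωpos.le
          linarith
      _ ≤ K * ‖e x‖ + ε * ω * C * M := by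
          have hnn : 0 ≤ ‖e x‖ := norm_nonneg _
          rw [hKdef, hMdef]
          nlinarith [mul_le_mul_of_nonneg_left hrx (mul_pos hεωpos hCpos).le,
            mul_le_mul_of_nonneg_right hεω (mul_nonneg hCpos.le hnn)]
  have hgr := norm_le_gronwallBound_of_norm_deriv_right_le hec hed he0 bound s
    (right_mem_Icc.2 hs.le)
  rw [gronwallBound_of_K_ne_0 hKpos.ne'] at hgr
  have hes : e s = r s - Rot s r0 := rfl
  rw [hes] at hgr
  have hK1 : 1 ≤ K := by rw [hKdef]; linarith
  have hX : 0 ≤ ε * ω * C * M := by positivity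
  have hfinal : 0 * Real.exp (K * (s - 0)) + ε * ω * C * M / K * (Real.exp (K * (s - 0)) - 1)
      ≤ ε * ω * C * M * Real.exp (K * s) := by
    rw [sub_zero, zero_mul, zero_add]
    have h1 : ε * ω * C * M / K ≤ ε * ω * C * M := by
      rw [div_le_iff₀ hKpos]
      nlinarith
    have h2 : Real.exp (K * s) - 1 ≤ Real.exp (K * s) := by linarith
    have h3 : 0 ≤ Real.exp (K * s) - 1 := by
      have : (1:ℝ) ≤ Real.exp (K * s) := by
        rw [← Real.exp_zero]
        apply Real.exp_le_exp.2
        positivity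
      linarith
    calc ε * ω * C * M / K * (Real.exp (K * s) - 1)
        ≤ ε * ω * C * M * (Real.exp (K * s) - 1) := mul_le_mul_of_nonneg_right h1 h3
      _ ≤ ε * ω * C * M * Real.exp (K * s) := by
          have := mul_le_mul_of_nonneg_left h2 hX
          linarith
  have : ‖r s - Rot s r0‖ ≤ ε * ω * C * M * Real.exp (K * s) := hgr.trans hfinal
  have hlt : ε * ω * C * M * Real.exp (K * s) < δ := by
    have hXpos : 0 < ε * ω * C * M * Real.exp (K * s) :=
      mul_pos (mul_pos (mul_pos (mul_pos hε hω) hCpos) hMpos) hexp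
    have h2X : 2 * (ε * ω * C * M * Real.exp (K * s)) = ε * (2 * ω * C * M * Real.exp (K * s)) := by
      ring
    linarith
  linarith
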